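/- arXiv:1402.3808 — 2 statements merged into one kernel-verified Lean document; each statement's English description precedes it below -/
import Mathlib

section
/- Let R be a Noetherian integral domain and M a finitely generated R-module. Then M is locally free of constant rank in a neighborhood of a prime p (i.e., M_p is free over R_p) if and only if the function q ↦ dim_{κ(q)} M ⊗ κ(q) is locally constant at p on Spec R. -/
open TensorProduct

section Aux

variable {R : Type*} [CommRing R]

/-- The localized module is isomorphic to the base change, as modules over the localization. -/
noncomputable def locTensorEquiv (M : Type*) [AddCommGroup M] [Module R M]
    (S : Submonoid R) :
    LocalizedModule S M ≃ₗ[Localization S] Localization S ⊗[R] M := by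
  haveI : IsLocalizedModule S (TensorProduct.mk R (Localization S) M 1) :=
    (isLocalizedModule_iff_isBaseChange S _ _).mpr (TensorProduct.isBaseChange R M _)
  let e := IsLocalizedModule.iso S (TensorProduct.mk R (Localization S) M 1)
  exact LinearEquiv.ofLinear
    (e.toLinearMap.extendScalarsOfIsLocalization S _)
    (e.symm.toLinearMap.extendScalarsOfIsLocalization S _)
    (by ext x; simp)
    (by ext x; simp)

/-- finrank of residue field tensor a finite free module equals its rank. -/
lemma finrank_residue_tensor_of_free (A : Type*) [CommRing A] [IsLocalRing A]
    (N : Type*) [AddCommGroup N] [Module A N] [Module.Finite A N] [Module.Free A N] :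
    Module.finrank (IsLocalRing.ResidueField A) (IsLocalRing.ResidueField A ⊗[A] N) =
      Module.finrank A N := by
  classical
  let b := Module.Free.chooseBasis A N
  rw [Module.finrank_eq_card_basis (b.baseChange (IsLocalRing.ResidueField A)),
    Module.finrank_eq_card_chooseBasisIndex]

lemma finrank_tensor_eq_of_algEquiv {K₁ K₂ : Type*} [Field K₁] [Field K₂]
    [Algebra R K₁] [Algebra R K₂] (e : K₁ ≃ₐ[R] K₂)
    (M : Type*) [AddCommGroup M] [Module R M] [Module.Finite R M] :
    Module.finrank K₁ (K₁ ⊗[R] M) = Module.finrank K₂ (K₂ ⊗[R] M) := by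
  letI : Algebra K₁ K₂ := e.toRingHom.toAlgebra
  haveI : IsScalarTower R K₁ K₂ :=
    IsScalarTower.of_algebraMap_eq fun r => (e.commutes r).symm
  haveI : Module.Finite K₁ (K₁ ⊗[R] M) := Module.Finite.base_change R K₁ M
  let f := AlgebraTensorModule.cancelBaseChange R K₁ K₂ K₂ M
  let b := Module.finBasis K₁ (K₁ ⊗[R] M)
  have h1 : Module.finrank K₂ (K₂ ⊗[K₁] (K₁ ⊗[R] M)) = Module.finrank K₂ (K₂ ⊗[R] M) :=
    LinearEquiv.finrank_eq f
  have h2 : Module.finrank K₂ (K₂ ⊗[K₁] (K₁ ⊗[R] M)) = Module.finrank K₁ (K₁ ⊗[R] M) := by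
    rw [Module.finrank_eq_card_basis (b.baseChange K₂), Module.finrank_eq_card_basis b, Fintype.card_fin]
  rw [← h1, h2]

end Aux

set_option maxHeartbeats 1000000 in
set_option synthInstance.maxHeartbeats 400000 in
open Module in
lemma free_of_finrank_residue_eq_finrank_fraction
    {A : Type*} [CommRing A] [IsDomain A] [IsNoetherianRing A] [IsLocalRing A]
    (K : Type*) [Field K] [Algebra A K] [IsFractionRing A K]
    (N : Type*) [AddCommGroup N] [Module A N] [Module.Finite A N]
    (h : Module.finrank (IsLocalRing.ResidueField A) (IsLocalRing.ResidueField A ⊗[A] N) =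
      Module.finrank K (K ⊗[A] N)) : Module.Free A N := by
  classical
  haveI : Module.Flat A K := IsLocalization.flat K (nonZeroDivisors A)
  set k := IsLocalRing.ResidueField A with hk
  set n := Module.finrank k (k ⊗[A] N) with hn
  let b : Basis (Fin n) k (k ⊗[A] N) := Module.finBasis k (k ⊗[A] N)
  have hsurjmk := TensorProduct.mk_surjective A N k Ideal.Quotient.mk_surjective
  choose f hf using fun i => hsurjmk (b i)
  have hspan : Submodule.span A (Set.range f) = ⊤ :=
    IsLocalRing.span_eq_top_of_tmul_eq_basis f b hf
  let φ : (Fin n → A) →ₗ[A] N := Fintype.linearCombination A f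
  have hφ : Function.Surjective φ := by
    rw [← LinearMap.range_eq_top, Fintype.range_linearCombination]
    exact hspan
  -- injectivity of x ↦ 1 ⊗ x on A^n
  have hmk : Function.Injective (TensorProduct.mk A K (Fin n → A) 1) := by
    have h1 : Function.Injective ((Algebra.linearMap A K).rTensor (Fin n → A)) :=
      Module.Flat.rTensor_preserves_injective_linearMap _ (IsFractionRing.injective A K)
    have h2 : (TensorProduct.mk A K (Fin n → A) 1) =
        ((Algebra.linearMap A K).rTensor (Fin n → A)) ∘ₗ
          (TensorProduct.lid A (Fin n → A)).symm.toLinearMap := by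
      ext x; simp
    rw [h2]
    exact h1.comp (TensorProduct.lid A (Fin n → A)).symm.injective
  let ι := (LinearMap.ker φ).subtype
  haveI : Module.Finite A (LinearMap.ker φ) :=
    Module.Finite.iff_fg.mpr (IsNoetherian.noetherian _)
  have hex : Function.Exact ι φ := φ.exact_subtype_ker_map
  have hexK : Function.Exact (ι.baseChange K) (φ.baseChange K) := by
    rw [LinearMap.baseChange_eq_ltensor, LinearMap.baseChange_eq_ltensor]
    exact Module.Flat.lTensor_exact K hex
  have hsurjK : Function.Surjective (φ.baseChange K) := by
    rw [LinearMap.baseChange_eq_ltensor]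
    exact LinearMap.lTensor_surjective K hφ
  have hinjK : Function.Injective (ι.baseChange K) := by
    rw [LinearMap.baseChange_eq_ltensor]
    exact Module.Flat.lTensor_preserves_injective_linearMap ι
      (Submodule.injective_subtype _)
  have hrank_pi : Module.finrank K (K ⊗[A] (Fin n → A)) = n := by
    rw [Module.finrank_eq_card_basis ((Pi.basisFun A (Fin n)).baseChange K), Fintype.card_fin]
  have hkerK : Module.finrank K (LinearMap.ker (φ.baseChange K)) = 0 := by
    have h3 := LinearMap.finrank_range_add_finrank_ker (φ.baseChange K)
    rw [LinearMap.range_eq_top.mpr hsurjK, finrank_top, hrank_pi, ← h] at h3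
    omega
  have hrange : LinearMap.ker (φ.baseChange K) = LinearMap.range (ι.baseChange K) :=
    LinearMap.exact_iff.mp hexK
  have hbot : LinearMap.ker (φ.baseChange K) = ⊥ := Submodule.finrank_eq_zero.mp hkerK
  have hzero : ∀ x : K ⊗[A] (LinearMap.ker φ), ι.baseChange K x = 0 := by
    intro x
    have hx : ι.baseChange K x ∈ LinearMap.range (ι.baseChange K) := ⟨x, rfl⟩
    rw [← hrange, hbot, Submodule.mem_bot] at hx
    exact hx
  haveI : Subsingleton (K ⊗[A] (LinearMap.ker φ)) :=
    ⟨fun x y => hinjK ((hzero x).trans (hzero y).symm)⟩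
  have hker : LinearMap.ker φ = ⊥ := by
    rw [eq_bot_iff]
    rintro x hx
    have h0 : (1:K) ⊗ₜ[A] (⟨x, hx⟩ : LinearMap.ker φ) = 0 := Subsingleton.elim _ _
    have h1 : (1:K) ⊗ₜ[A] x = 0 := by
      have h2 := congrArg (ι.baseChange K) h0
      simpa [ι] using h2
    have := hmk (a₁ := x) (a₂ := 0) (by simpa using h1)
    simpa [Submodule.mem_bot] using this
  exact Module.Free.of_equiv (LinearEquiv.ofBijective φ ⟨LinearMap.ker_eq_bot.mp hker, hφ⟩)

lemma fiber_rank_eq_finrank_localization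
    (R : Type*) [CommRing R] (M : Type*) [AddCommGroup M] [Module R M] [Module.Finite R M]
    (q : PrimeSpectrum R)
    [Module.Free (Localization.AtPrime q.asIdeal) (LocalizedModule q.asIdeal.primeCompl M)] :
    Module.finrank (IsLocalRing.ResidueField (Localization.AtPrime q.asIdeal))
        (IsLocalRing.ResidueField (Localization.AtPrime q.asIdeal) ⊗[R] M) =
      Module.finrank (Localization.AtPrime q.asIdeal)
        (LocalizedModule q.asIdeal.primeCompl M) := by
  set Rq := Localization.AtPrime q.asIdeal
  set κ := IsLocalRing.ResidueField Rq
  haveI : Module.Free Rq (Rq ⊗[R] M) :=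
    Module.Free.of_equiv (locTensorEquiv M q.asIdeal.primeCompl)
  have h1 : Module.finrank κ (κ ⊗[R] M) = Module.finrank κ (κ ⊗[Rq] (Rq ⊗[R] M)) :=
    (LinearEquiv.finrank_eq (AlgebraTensorModule.cancelBaseChange R Rq κ κ M)).symm
  rw [h1, finrank_residue_tensor_of_free]
  exact (LinearEquiv.finrank_eq (locTensorEquiv M q.asIdeal.primeCompl)).symm

/-- A finitely generated module over a Noetherian integral domain is locally free at a prime
`p` (i.e. `M_p` is free over `R_p`) if and only if the fiber-dimension function
`q ↦ dim_{κ(q)} (M ⊗ κ(q))` is locally constant at `p` on `Spec R`. -/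
theorem free_localization_iff_fiber_rank_locally_constant
    (R : Type*) [CommRing R] [IsDomain R] [IsNoetherianRing R]
    (M : Type*) [AddCommGroup M] [Module R M] [Module.Finite R M]
    (p : PrimeSpectrum R) :
    Module.Free (Localization.AtPrime p.asIdeal)
        (LocalizedModule p.asIdeal.primeCompl M) ↔
      ∃ U : Set (PrimeSpectrum R), IsOpen U ∧ p ∈ U ∧ ∀ q ∈ U,
        Module.finrank (IsLocalRing.ResidueField (Localization.AtPrime q.asIdeal))
            (IsLocalRing.ResidueField (Localization.AtPrime q.asIdeal) ⊗[R] M) =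
          Module.finrank (IsLocalRing.ResidueField (Localization.AtPrime p.asIdeal))
            (IsLocalRing.ResidueField (Localization.AtPrime p.asIdeal) ⊗[R] M) := by
  constructor
  · intro hfree
    haveI : Module.FinitePresentation R M := Module.finitePresentation_of_finite R M
    have hp : p ∈ Module.freeLocus R M := hfree
    have hlc := Module.isLocallyConstant_rankAtStalk_freeLocus (R := R) (M := M)
    obtain ⟨W, hW, hpW, hconst⟩ := (IsLocallyConstant.iff_exists_open _).mp hlc ⟨p, hp⟩
    obtain ⟨V, hV, hVW⟩ := isOpen_induced_iff.mp hW
    refine ⟨V ∩ Module.freeLocus R M, hV.inter Module.isOpen_freeLocus, ⟨?_, hp⟩, ?_⟩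
    · rw [← hVW] at hpW; exact hpW
    · intro q hq
      haveI : Module.Free (Localization.AtPrime q.asIdeal)
          (LocalizedModule q.asIdeal.primeCompl M) := hq.2
      haveI := hfree
      have h1 := hconst ⟨q, hq.2⟩ (by rw [← hVW]; exact hq.1)
      rw [fiber_rank_eq_finrank_localization R M q, fiber_rank_eq_finrank_localization R M p]
      exact h1
  · rintro ⟨U, hU, hpU, hconst⟩
    set Rp := Localization.AtPrime p.asIdeal with hRp
    haveI : IsNoetherianRing Rp := IsLocalization.isNoetherianRing p.asIdeal.primeCompl Rp ‹_›
    obtain ⟨s, ⟨f, rfl⟩, hps, hsU⟩ :=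
      PrimeSpectrum.isTopologicalBasis_basic_opens.isOpen_iff.mp hU p hpU
    have hf0 : f ≠ 0 := by
      rintro rfl
      simp at hps
    have hbot : (⟨⊥, Ideal.bot_prime⟩ : PrimeSpectrum R) ∈ U := by
      apply hsU
      exact (PrimeSpectrum.mem_basicOpen f _).mpr (by simpa [Ideal.mem_bot] using hf0)
    haveI : (⊥ : Ideal R).IsPrime := Ideal.bot_prime
    set L := Localization.AtPrime (⊥ : Ideal R) with hL
    have hmax : IsLocalRing.maximalIdeal L = ⊥ := by
      rw [← Localization.AtPrime.map_eq_maximalIdeal, Ideal.map_bot]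
    have hinjres : Function.Injective (algebraMap L (IsLocalRing.ResidueField L)) := by
      rw [RingHom.injective_iff_ker_eq_bot]
      rw [IsLocalRing.ResidueField.algebraMap_eq,
        IsLocalRing.ker_residue, hmax]
    have e1 : L ≃ₐ[R] IsLocalRing.ResidueField L :=
      AlgEquiv.ofBijective (IsScalarTower.toAlgHom R L (IsLocalRing.ResidueField L))
        ⟨hinjres, Ideal.Quotient.mk_surjective⟩
    haveI hIsLoc : IsLocalization (⊥ : Ideal R).primeCompl (IsLocalRing.ResidueField L) :=
      IsLocalization.isLocalization_of_algEquiv _ e1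
    have hcompl : (⊥ : Ideal R).primeCompl = nonZeroDivisors R := by
      ext x
      simp [Ideal.primeCompl, mem_nonZeroDivisors_iff_ne_zero, Ideal.mem_bot]
    haveI : IsFractionRing R (IsLocalRing.ResidueField L) := by
      rw [IsFractionRing, ← hcompl]; exact hIsLoc
    have e2 : IsLocalRing.ResidueField L ≃ₐ[R] FractionRing R :=
      IsLocalization.algEquiv (nonZeroDivisors R) _ _
    have hgen : Module.finrank (IsLocalRing.ResidueField L) (IsLocalRing.ResidueField L ⊗[R] M)
        = Module.finrank (FractionRing R) (FractionRing R ⊗[R] M) :=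
      finrank_tensor_eq_of_algEquiv e2 M
    have hUb := hconst _ hbot
    have key : Module.finrank (IsLocalRing.ResidueField Rp)
        (IsLocalRing.ResidueField Rp ⊗[Rp] (Rp ⊗[R] M))
        = Module.finrank (FractionRing R) (FractionRing R ⊗[Rp] (Rp ⊗[R] M)) := by
      have ce1 : (IsLocalRing.ResidueField Rp ⊗[Rp] (Rp ⊗[R] M)) ≃ₗ[IsLocalRing.ResidueField Rp]
          (IsLocalRing.ResidueField Rp ⊗[R] M) :=
        AlgebraTensorModule.cancelBaseChange R Rp _ _ M
      have ce2 : (FractionRing R ⊗[Rp] (Rp ⊗[R] M)) ≃ₗ[FractionRing R]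
          (FractionRing R ⊗[R] M) :=
        AlgebraTensorModule.cancelBaseChange R Rp _ _ M
      have c1 : Module.finrank (IsLocalRing.ResidueField Rp)
            (IsLocalRing.ResidueField Rp ⊗[Rp] (Rp ⊗[R] M))
          = Module.finrank (IsLocalRing.ResidueField Rp) (IsLocalRing.ResidueField Rp ⊗[R] M) :=
        LinearEquiv.finrank_eq ce1
      have c2 : Module.finrank (FractionRing R) (FractionRing R ⊗[Rp] (Rp ⊗[R] M))
          = Module.finrank (FractionRing R) (FractionRing R ⊗[R] M) :=
        LinearEquiv.finrank_eq ce2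
      rw [c1, c2, ← hgen, ← hUb]
    haveI : Module.Free Rp (Rp ⊗[R] M) :=
      free_of_finrank_residue_eq_finrank_fraction (FractionRing R) (Rp ⊗[R] M) key
    exact Module.Free.of_equiv (locTensorEquiv M p.asIdeal.primeCompl).symm
end

section
/- Let M be a finitely generated module over a Noetherian commutative ring R. The map q ↦ dim_{κ(q)} M ⊗ κ(q) on Spec R is upper semicontinuous. -/
set_option maxHeartbeats 1000000


open TensorProduct Module

/-- In `K ⊗[R] M` the pure tensors `1 ⊗ m` span everything over `K`. -/
private lemma span_one_tmul_eq_top (R : Type*) [CommRing R] (K : Type*) [CommRing K]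
    [Algebra R K] (M : Type*) [AddCommGroup M] [Module R M] :
    Submodule.span K (Set.range fun m : M => (1 : K) ⊗ₜ[R] m) = ⊤ := by
  rw [eq_top_iff]
  rintro x -
  induction x using TensorProduct.induction_on with
  | zero => exact zero_mem _
  | tmul c m =>
      have : c ⊗ₜ[R] m = c • ((1 : K) ⊗ₜ[R] m) := by
        rw [TensorProduct.smul_tmul', smul_eq_mul, mul_one]
      rw [this]
      exact Submodule.smul_mem _ _ (Submodule.subset_span ⟨m, rfl⟩)
  | add x y hx hy => exact add_mem hx hy

/-- Key local statement: around each prime `q` there is a basic open set on which the fiber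
dimension is at most its value at `q`. -/
private lemma exists_basicOpen_fiber_rank_le
    (R : Type*) [CommRing R]
    (M : Type*) [AddCommGroup M] [Module R M] [Module.Finite R M]
    (q : PrimeSpectrum R) :
    ∃ f ∉ q.asIdeal, ∀ p : PrimeSpectrum R, f ∉ p.asIdeal →
      Module.finrank (IsLocalRing.ResidueField (Localization.AtPrime p.asIdeal))
          (IsLocalRing.ResidueField (Localization.AtPrime p.asIdeal) ⊗[R] M) ≤
        Module.finrank (IsLocalRing.ResidueField (Localization.AtPrime q.asIdeal))
          (IsLocalRing.ResidueField (Localization.AtPrime q.asIdeal) ⊗[R] M) := by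
  classical
  set A := Localization.AtPrime q.asIdeal with hA
  set K := IsLocalRing.ResidueField A with hK
  -- pick a basis of `K ⊗ M` consisting of pure tensors `1 ⊗ m`.
  obtain ⟨b, hbsub, hbspan, hbli⟩ :=
    exists_linearIndependent K (Set.range fun m : M => (1 : K) ⊗ₜ[R] m)
  rw [span_one_tmul_eq_top R K M] at hbspan
  have hbfin : b.Finite := hbli.set_finite_of_isNoetherian
  haveI := hbfin.fintype
  let bas : Basis b K (K ⊗[R] M) :=
    Basis.mk hbli (by rw [Subtype.range_coe, hbspan])
  have hcard : Module.finrank K (K ⊗[R] M) = Fintype.card b :=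
    finrank_eq_card_basis bas
  -- lift the basis vectors to elements of `M`.
  have hmem : ∀ x : b, ∃ m : M, (1 : K) ⊗ₜ[R] m = (x : K ⊗[R] M) := fun x => hbsub x.2
  choose g hg using hmem
  set N : Submodule R M := Submodule.span R (Set.range g) with hN
  set Q := M ⧸ N with hQdef
  haveI : Module.Finite R Q := Module.Finite.of_surjective N.mkQ (Submodule.mkQ_surjective N)
  -- the fiber of `Q` at `q` vanishes
  have h2 : ∀ z, z ∈ Submodule.span K b → LinearMap.baseChange K N.mkQ z = 0 := by
    intro z hz
    induction hz using Submodule.span_induction with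
      | mem z hz =>
          have : ((1 : K) ⊗ₜ[R] g ⟨z, hz⟩) = z := hg ⟨z, hz⟩
          rw [← this, LinearMap.baseChange_tmul]
          have : N.mkQ (g ⟨z, hz⟩) = 0 := by
            rw [Submodule.mkQ_apply, Submodule.Quotient.mk_eq_zero]
            exact Submodule.subset_span ⟨_, rfl⟩
          rw [this, TensorProduct.tmul_zero]
      | zero => simp
      | add u v hu hv hu' hv' => rw [map_add, hu', hv', add_zero]
      | smul a u hu hu' => rw [map_smul, hu', smul_zero]
  have key : ∀ x : M, ((1 : K) ⊗ₜ[R] (Submodule.Quotient.mk x : Q)) = 0 := by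
    intro x
    have := h2 ((1 : K) ⊗ₜ[R] x) (by rw [hbspan]; trivial)
    simpa using this
  have hQsub : Subsingleton (K ⊗[R] Q) := by
    refine subsingleton_of_forall_eq 0 fun z => ?_
    have hz : z ∈ Submodule.span K (Set.range fun x : Q => (1 : K) ⊗ₜ[R] x) := by
      rw [span_one_tmul_eq_top R K Q]; trivial
    induction hz using Submodule.span_induction with
    | mem z hz =>
        obtain ⟨x, rfl⟩ := hz
        obtain ⟨x, rfl⟩ := Submodule.Quotient.mk_surjective N x
        exact key x
    | zero => rfl
    | add u v hu hv hu' hv' => rw [hu', hv', add_zero]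
    | smul a u hu hu' => rw [hu', smul_zero]
  -- Nakayama: the localization of `Q` at `q` vanishes
  set QA := LocalizedModule q.asIdeal.primeCompl Q with hQA
  haveI : Module.Finite A QA :=
    Module.Finite.of_isLocalizedModule q.asIdeal.primeCompl
      (LocalizedModule.mkLinearMap q.asIdeal.primeCompl Q)
  have e1 : A ⊗[R] Q ≃ₗ[A] QA :=
    (IsLocalizedModule.isBaseChange q.asIdeal.primeCompl A
      (LocalizedModule.mkLinearMap q.asIdeal.primeCompl Q)).equiv
  have e2 : K ⊗[A] (A ⊗[R] Q) ≃ₗ[K] K ⊗[R] Q :=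
    TensorProduct.AlgebraTensorModule.cancelBaseChange R A K K Q
  haveI : Subsingleton (K ⊗[A] (A ⊗[R] Q)) := e2.toEquiv.subsingleton
  haveI : Subsingleton (K ⊗[A] QA) := (LinearEquiv.lTensor K e1).symm.toEquiv.subsingleton
  haveI hQAsub : Subsingleton QA :=
    (IsLocalRing.subsingleton_tensorProduct (R := A)).mp ‹_›
  -- spread out: `Q[1/f] = 0` for some `f ∉ q`
  obtain ⟨f, hf, hfsub⟩ := LocalizedModule.exists_subsingleton_away (M := Q) q.asIdeal
  refine ⟨f, hf, fun p hp => ?_⟩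
  set B := Localization.AtPrime p.asIdeal with hB
  set L := IsLocalRing.ResidueField B with hL
  -- the images `1 ⊗ g i` span the fiber at `p`
  have hsp : Submodule.span L (Set.range fun i : b => (1 : L) ⊗ₜ[R] g i) = ⊤ := by
    set S := Submodule.span L (Set.range fun i : b => (1 : L) ⊗ₜ[R] g i) with hS
    have hNS : ∀ t ∈ N, ((1 : L) ⊗ₜ[R] t) ∈ S := by
      intro t ht
      induction ht using Submodule.span_induction with
      | mem z hz =>
          obtain ⟨i, rfl⟩ := hz
          exact Submodule.subset_span ⟨i, rfl⟩
      | zero => rw [TensorProduct.tmul_zero]; exact zero_mem _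
      | add u v hu hv hu' hv' => rw [TensorProduct.tmul_add]; exact add_mem hu' hv'
      | smul a u hu hu' =>
          rw [TensorProduct.tmul_smul, ← algebraMap_smul L a]
          exact Submodule.smul_mem _ _ hu'
    rw [eq_top_iff, ← span_one_tmul_eq_top R L M, Submodule.span_le]
    rintro _ ⟨x, rfl⟩
    -- find `r` in the powers of `f` killing the class of `x`
    obtain ⟨r, hrf, hrx⟩ :=
      (LocalizedModule.subsingleton_iff.mp hfsub) (Submodule.Quotient.mk x : Q)
    have hrN : r • x ∈ N := by
      rwa [← Submodule.Quotient.mk_smul, Submodule.Quotient.mk_eq_zero] at hrx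
    have hrp : r ∈ p.asIdeal.primeCompl := by
      refine Submonoid.powers_le.mpr ?_ hrf
      exact hp
    have hru : IsUnit (algebraMap R B r) :=
      (IsLocalization.AtPrime.isUnit_to_map_iff B p.asIdeal r).mpr hrp
    have hrL : IsUnit (algebraMap R L r) := by
      rw [IsScalarTower.algebraMap_apply R B L r]
      exact hru.map (algebraMap B L)
    have heq : (algebraMap R L r) • ((1 : L) ⊗ₜ[R] x) = (1 : L) ⊗ₜ[R] (r • x) := by
      rw [TensorProduct.tmul_smul, algebraMap_smul]
    have : (algebraMap R L r) • ((1 : L) ⊗ₜ[R] x) ∈ S := heq ▸ hNS _ hrN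
    exact (S.smul_mem_iff hrL.ne_zero).mp this
  calc Module.finrank L (L ⊗[R] M)
      = Module.finrank L (⊤ : Submodule L (L ⊗[R] M)) := (finrank_top L _).symm
    _ = Module.finrank L
        (Submodule.span L (Set.range fun i : b => (1 : L) ⊗ₜ[R] g i)) := by rw [hsp]
    _ ≤ Fintype.card b := finrank_range_le_card _
    _ = Module.finrank K (K ⊗[R] M) := hcard.symm

/-- The fiber-dimension function `q ↦ dim_{κ(q)} (M ⊗ κ(q))` of a finitely generated module
over a Noetherian commutative ring is upper semicontinuous on `Spec R`. -/
theorem fiber_rank_upperSemicontinuous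
    (R : Type*) [CommRing R] [IsNoetherianRing R]
    (M : Type*) [AddCommGroup M] [Module R M] [Module.Finite R M] :
    UpperSemicontinuous (fun q : PrimeSpectrum R =>
      Module.finrank (IsLocalRing.ResidueField (Localization.AtPrime q.asIdeal))
        (IsLocalRing.ResidueField (Localization.AtPrime q.asIdeal) ⊗[R] M)) := by
  intro q y hy
  obtain ⟨f, hf, hle⟩ := exists_basicOpen_fiber_rank_le R M q
  have hopen : IsOpen {p : PrimeSpectrum R | f ∉ p.asIdeal} :=
    (PrimeSpectrum.basicOpen f).2
  have hmem : q ∈ {p : PrimeSpectrum R | f ∉ p.asIdeal} := hf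
  filter_upwards [hopen.mem_nhds hmem] with p hp
  exact lt_of_le_of_lt (hle p hp) hy
end
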